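/- Let x ∈ ℝ⁶ with all coordinates positive and x1 > 1, let i ∈ {2,3,4,5}, and let î be defined by 2̂ = 3, 3̂ = 2, 4̂ = 5, 5̂ = 4; let m_k denote the k-th coordinate unit vector of ℝ⁶, and let φ(x) = (x3·x4 + x2·x5 + x1·x2·x3 + x1·x4·x5 + x6 − x1²·x6) / (√(x1² + x3² + x5² + 2·x1·x3·x5 − 1) · √(x2² + x4² + 2·x1·x2·x4)). (i) If ∂φ/∂x_i(x) ≥ 0, then for all t, s ≥ 0 one has ∂φ/∂x_i(x + t·m_i + s·m_î) ≥ 0; in particular φ(x) ≤ φ(y) for any y with y_i ≥ x_i and y_j = x_j for all j ≠ i. (ii) If ∂φ/∂x_i(x) ≤ 0, then for all t, s ≤ 0 with x + t·m_i + s·m_î having all coordinates positive one has ∂φ/∂x_i(x + t·m_i + s·m_î) ≤ 0; in particular φ(x) ≤ φ(y) for any y with positive coordinates, y_i ≤ x_i and y_j = x_j for all j ≠ i. -/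

import Mathlib

/-- The cosine of the dihedral angle at the hyper-ideal edge e23 of a decorated
3-1 type hyperbolic tetrahedron, as a function of `x : Fin 6 → ℝ`
(with `x 0, ..., x 5` standing for `x1, ..., x6`). -/
noncomputable def Phi (x : Fin 6 → ℝ) : ℝ :=
  (x 2 * x 3 + x 1 * x 4 + x 0 * x 1 * x 2 + x 0 * x 3 * x 4 + x 5 - (x 0) ^ 2 * x 5) /
    (Real.sqrt ((x 0) ^ 2 + (x 2) ^ 2 + (x 4) ^ 2 + 2 * x 0 * x 2 * x 4 - 1) *
      Real.sqrt ((x 1) ^ 2 + (x 3) ^ 2 + 2 * x 0 * x 1 * x 3))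

/-- The partial derivative of `Phi` in the `i`-th coordinate. -/
noncomputable def partialPhi (i : Fin 6) (x : Fin 6 → ℝ) : ℝ :=
  deriv (fun t => Phi (Function.update x i t)) (x i)

/-- The `k`-th coordinate unit vector of ℝ⁶. -/
noncomputable def unitVec (k : Fin 6) : Fin 6 → ℝ := Pi.single k 1

/-! ### Auxiliary lemmas -/

lemma shift_apply (x : Fin 6 → ℝ) (i ih : Fin 6) (t s : ℝ) (j : Fin 6) :
    (x + t • unitVec i + s • unitVec ih) j
      = x j + t * (if j = i then 1 else 0) + s * (if j = ih then 1 else 0) := by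
  simp [unitVec, Pi.single_apply, eq_comm]

lemma update_as_shift (x : Fin 6 → ℝ) (i ih : Fin 6) (t : ℝ) :
    Function.update x i t = x + (t - x i) • unitVec i + (0:ℝ) • unitVec ih := by
  funext j
  rw [shift_apply, Function.update_apply]
  split_ifs with h1 h2 <;> first | (subst h1; ring) | ring

lemma generic_hasDerivAt (p q r c K : ℝ) (hK : 0 < K) {t : ℝ} (hQ : 0 < t^2 + 2*r*t + c) :
    HasDerivAt (fun s => (p*s + q) / (K * Real.sqrt (s^2 + 2*r*s + c)))
      ((p*(t^2+2*r*t+c) - (p*t+q)*(t+r)) / (K * Real.sqrt (t^2+2*r*t+c)^3)) t := by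
  have hS : 0 < Real.sqrt (t^2+2*r*t+c) := Real.sqrt_pos.mpr hQ
  have hq : HasDerivAt (fun s : ℝ => s^2+2*r*s+c) (2*t+2*r) t := by
    have h1 : HasDerivAt (fun s : ℝ => s^2) (2*t) t := by
      simpa using hasDerivAt_pow 2 t
    have h2 : HasDerivAt (fun s : ℝ => 2*r*s) (2*r) t := by
      simpa [mul_comm] using (hasDerivAt_id t).const_mul (2*r)
    simpa using (h1.add h2).add_const c
  have hsqrt : HasDerivAt (fun s : ℝ => Real.sqrt (s^2+2*r*s+c))
      (1 / (2 * Real.sqrt (t^2+2*r*t+c)) * (2*t+2*r)) t :=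
    (Real.hasDerivAt_sqrt hQ.ne').comp t hq
  have hden : HasDerivAt (fun s : ℝ => K * Real.sqrt (s^2+2*r*s+c))
      (K * (1 / (2 * Real.sqrt (t^2+2*r*t+c)) * (2*t+2*r))) t := hsqrt.const_mul K
  have hnum : HasDerivAt (fun s : ℝ => p*s+q) p t := by
    simpa using ((hasDerivAt_id t).const_mul p).add_const q
  have hd := hnum.div hden (by positivity)
  refine hd.congr_deriv ?_
  rw [show t^2+2*r*t+c = Real.sqrt (t^2+2*r*t+c)^2 from (Real.sq_sqrt hQ.le).symm]
  set S := Real.sqrt (t^2+2*r*t+c)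
  field_simp
  rw [Real.sqrt_sq hS.le]

lemma hA2pos (x : Fin 6 → ℝ) (hpos : ∀ j, 0 < x j) (hx1 : 1 < x 0) :
    0 < (x 0)^2+(x 2)^2+(x 4)^2+2*x 0*x 2*x 4-1 := by
  nlinarith [hpos 2, hpos 4, mul_pos (mul_pos (hpos 0) (hpos 2)) (hpos 4)]

lemma hB2pos (x : Fin 6 → ℝ) (hpos : ∀ j, 0 < x j) :
    0 < (x 1)^2 + 2*(x 0*x 3)*(x 1) + (x 3)^2 := by
  nlinarith [hpos 1, hpos 3, mul_pos (mul_pos (hpos 0) (hpos 3)) (hpos 1)]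

/-! ### Exact formulas for the four partial derivatives -/

lemma hasD1 (x : Fin 6 → ℝ) (hpos : ∀ j, 0 < x j) (hx1 : 1 < x 0) :
    HasDerivAt (fun t => Phi (Function.update x 1 t))
      (((x 4 + x 0*x 2)*((x 1)^2+2*(x 0*x 3)*(x 1)+(x 3)^2)
        - ((x 4 + x 0*x 2)*(x 1)+(x 2*x 3 + x 0*x 3*x 4 + x 5 - (x 0)^2*x 5))*((x 1)+(x 0*x 3)))
        / (Real.sqrt ((x 0)^2+(x 2)^2+(x 4)^2+2*x 0*x 2*x 4-1)
            * Real.sqrt ((x 1)^2+2*(x 0*x 3)*(x 1)+(x 3)^2)^3)) (x 1) := by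
  have hK : 0 < Real.sqrt ((x 0)^2+(x 2)^2+(x 4)^2+2*x 0*x 2*x 4-1) :=
    Real.sqrt_pos.mpr (hA2pos x hpos hx1)
  have hQ : 0 < (x 1)^2 + 2*(x 0*x 3)*(x 1) + (x 3)^2 := hB2pos x hpos
  have hfun : (fun t => Phi (Function.update x 1 t)) =
      (fun t => ((x 4 + x 0*x 2)*t + (x 2*x 3 + x 0*x 3*x 4 + x 5 - (x 0)^2*x 5)) /
        (Real.sqrt ((x 0)^2+(x 2)^2+(x 4)^2+2*x 0*x 2*x 4-1)
          * Real.sqrt (t^2 + 2*(x 0*x 3)*t + (x 3)^2))) := by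
    funext t
    simp only [Phi, Function.update_apply, show ((2:Fin 6) = 1) = False by simp,
      show ((3:Fin 6) = 1) = False by simp, show ((0:Fin 6) = 1) = False by simp,
      show ((4:Fin 6) = 1) = False by simp, show ((5:Fin 6) = 1) = False by simp,
      if_true, if_false, if_pos rfl]
    rw [show t ^ 2 + 2*(x 0*x 3)*t + (x 3)^2 = t^2 + (x 3)^2 + 2*x 0*t*(x 3) by ring]
    ring_nf
  rw [hfun]
  exact generic_hasDerivAt _ _ _ _ _ hK hQ

lemma hasD3 (x : Fin 6 → ℝ) (hpos : ∀ j, 0 < x j) (hx1 : 1 < x 0) :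
    HasDerivAt (fun t => Phi (Function.update x 3 t))
      (((x 2 + x 0*x 4)*((x 3)^2+2*(x 0*x 1)*(x 3)+(x 1)^2)
        - ((x 2 + x 0*x 4)*(x 3)+(x 1*x 4 + x 0*x 1*x 2 + x 5 - (x 0)^2*x 5))*((x 3)+(x 0*x 1)))
        / (Real.sqrt ((x 0)^2+(x 2)^2+(x 4)^2+2*x 0*x 2*x 4-1)
            * Real.sqrt ((x 3)^2+2*(x 0*x 1)*(x 3)+(x 1)^2)^3)) (x 3) := by
  have hK : 0 < Real.sqrt ((x 0)^2+(x 2)^2+(x 4)^2+2*x 0*x 2*x 4-1) :=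
    Real.sqrt_pos.mpr (hA2pos x hpos hx1)
  have hQ : 0 < (x 3)^2 + 2*(x 0*x 1)*(x 3) + (x 1)^2 := by
    nlinarith [hpos 1, hpos 3, mul_pos (mul_pos (hpos 0) (hpos 1)) (hpos 3)]
  have hfun : (fun t => Phi (Function.update x 3 t)) =
      (fun t => ((x 2 + x 0*x 4)*t + (x 1*x 4 + x 0*x 1*x 2 + x 5 - (x 0)^2*x 5)) /
        (Real.sqrt ((x 0)^2+(x 2)^2+(x 4)^2+2*x 0*x 2*x 4-1)
          * Real.sqrt (t^2 + 2*(x 0*x 1)*t + (x 1)^2))) := by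
    funext t
    simp only [Phi, Function.update_apply, show ((2:Fin 6) = 3) = False by simp,
      show ((1:Fin 6) = 3) = False by simp, show ((0:Fin 6) = 3) = False by simp,
      show ((4:Fin 6) = 3) = False by simp, show ((5:Fin 6) = 3) = False by simp,
      if_true, if_false, if_pos rfl]
    rw [show t ^ 2 + 2*(x 0*x 1)*t + (x 1)^2 = (x 1)^2 + t^2 + 2*x 0*(x 1)*t by ring]
    ring_nf
  rw [hfun]
  exact generic_hasDerivAt _ _ _ _ _ hK hQ

lemma hasD2 (x : Fin 6 → ℝ) (hpos : ∀ j, 0 < x j) (hx1 : 1 < x 0) :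
    HasDerivAt (fun t => Phi (Function.update x 2 t))
      (((x 3 + x 0*x 1)*((x 2)^2+2*(x 0*x 4)*(x 2)+((x 0)^2+(x 4)^2-1))
        - ((x 3 + x 0*x 1)*(x 2)+(x 1*x 4 + x 0*x 3*x 4 + x 5 - (x 0)^2*x 5))*((x 2)+(x 0*x 4)))
        / (Real.sqrt ((x 1)^2+(x 3)^2+2*x 0*x 1*x 3)
            * Real.sqrt ((x 2)^2+2*(x 0*x 4)*(x 2)+((x 0)^2+(x 4)^2-1))^3)) (x 2) := by
  have hK : 0 < Real.sqrt ((x 1)^2+(x 3)^2+2*x 0*x 1*x 3) := by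
    apply Real.sqrt_pos.mpr
    nlinarith [hpos 1, hpos 3, mul_pos (mul_pos (hpos 0) (hpos 1)) (hpos 3)]
  have hQ : 0 < (x 2)^2+2*(x 0*x 4)*(x 2)+((x 0)^2+(x 4)^2-1) := by
    nlinarith [hpos 2, hpos 4, mul_pos (mul_pos (hpos 0) (hpos 4)) (hpos 2)]
  have hfun : (fun t => Phi (Function.update x 2 t)) =
      (fun t => ((x 3 + x 0*x 1)*t + (x 1*x 4 + x 0*x 3*x 4 + x 5 - (x 0)^2*x 5)) /
        (Real.sqrt ((x 1)^2+(x 3)^2+2*x 0*x 1*x 3)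
          * Real.sqrt (t^2 + 2*(x 0*x 4)*t + ((x 0)^2+(x 4)^2-1)))) := by
    funext t
    simp only [Phi, Function.update_apply, show ((1:Fin 6) = 2) = False by simp,
      show ((3:Fin 6) = 2) = False by simp, show ((0:Fin 6) = 2) = False by simp,
      show ((4:Fin 6) = 2) = False by simp, show ((5:Fin 6) = 2) = False by simp,
      if_true, if_false, if_pos rfl]
    rw [show t ^ 2 + 2*(x 0*x 4)*t + ((x 0)^2+(x 4)^2-1)
        = (x 0)^2 + t^2 + (x 4)^2 + 2*x 0*t*(x 4) - 1 by ring, mul_comm]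
    ring_nf
  rw [hfun]
  exact generic_hasDerivAt _ _ _ _ _ hK hQ

lemma hasD4 (x : Fin 6 → ℝ) (hpos : ∀ j, 0 < x j) (hx1 : 1 < x 0) :
    HasDerivAt (fun t => Phi (Function.update x 4 t))
      (((x 1 + x 0*x 3)*((x 4)^2+2*(x 0*x 2)*(x 4)+((x 0)^2+(x 2)^2-1))
        - ((x 1 + x 0*x 3)*(x 4)+(x 2*x 3 + x 0*x 1*x 2 + x 5 - (x 0)^2*x 5))*((x 4)+(x 0*x 2)))
        / (Real.sqrt ((x 1)^2+(x 3)^2+2*x 0*x 1*x 3)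
            * Real.sqrt ((x 4)^2+2*(x 0*x 2)*(x 4)+((x 0)^2+(x 2)^2-1))^3)) (x 4) := by
  have hK : 0 < Real.sqrt ((x 1)^2+(x 3)^2+2*x 0*x 1*x 3) := by
    apply Real.sqrt_pos.mpr
    nlinarith [hpos 1, hpos 3, mul_pos (mul_pos (hpos 0) (hpos 1)) (hpos 3)]
  have hQ : 0 < (x 4)^2+2*(x 0*x 2)*(x 4)+((x 0)^2+(x 2)^2-1) := by
    nlinarith [hpos 2, hpos 4, mul_pos (mul_pos (hpos 0) (hpos 2)) (hpos 4)]
  have hfun : (fun t => Phi (Function.update x 4 t)) =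
      (fun t => ((x 1 + x 0*x 3)*t + (x 2*x 3 + x 0*x 1*x 2 + x 5 - (x 0)^2*x 5)) /
        (Real.sqrt ((x 1)^2+(x 3)^2+2*x 0*x 1*x 3)
          * Real.sqrt (t^2 + 2*(x 0*x 2)*t + ((x 0)^2+(x 2)^2-1)))) := by
    funext t
    simp only [Phi, Function.update_apply, show ((1:Fin 6) = 4) = False by simp,
      show ((3:Fin 6) = 4) = False by simp, show ((0:Fin 6) = 4) = False by simp,
      show ((2:Fin 6) = 4) = False by simp, show ((5:Fin 6) = 4) = False by simp,
      if_true, if_false, if_pos rfl]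
    rw [show t ^ 2 + 2*(x 0*x 2)*t + ((x 0)^2+(x 2)^2-1)
        = (x 0)^2 + (x 2)^2 + t^2 + 2*x 0*(x 2)*t - 1 by ring, mul_comm]
    ring_nf
  rw [hfun]
  exact generic_hasDerivAt _ _ _ _ _ hK hQ

/-! ### Sign of the partial derivatives: `∂Φ/∂x_i = C · H_i` with `C > 0` -/

lemma hC1 (z : Fin 6 → ℝ) (hp : ∀ j, 0 < z j) (h1 : 1 < z 0) :
    ∃ C, 0 < C ∧ partialPhi 1 z
      = C * (z 1*z 2*z 3 + z 1*z 5 + z 0*z 3*z 5 - (z 3)^2*z 4) := by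
  have hK : 0 < Real.sqrt ((z 0)^2+(z 2)^2+(z 4)^2+2*z 0*z 2*z 4-1) :=
    Real.sqrt_pos.mpr (hA2pos z hp h1)
  have hS : 0 < Real.sqrt ((z 1)^2+2*(z 0*z 3)*(z 1)+(z 3)^2) :=
    Real.sqrt_pos.mpr (hB2pos z hp)
  refine ⟨((z 0)^2 - 1) / (Real.sqrt ((z 0)^2+(z 2)^2+(z 4)^2+2*z 0*z 2*z 4-1)
      * Real.sqrt ((z 1)^2+2*(z 0*z 3)*(z 1)+(z 3)^2)^3),
    div_pos (by nlinarith) (mul_pos hK (pow_pos hS 3)), ?_⟩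
  rw [div_mul_eq_mul_div]
  unfold partialPhi
  rw [(hasD1 z hp h1).deriv]
  congr 1
  ring

lemma hC2 (z : Fin 6 → ℝ) (hp : ∀ j, 0 < z j) (h1 : 1 < z 0) :
    ∃ C, 0 < C ∧ partialPhi 2 z
      = C * (z 3 + z 0*z 1 + z 1*z 2*z 4 + z 2*z 5 + z 0*z 4*z 5 - z 3*(z 4)^2) := by
  have hK : 0 < Real.sqrt ((z 1)^2+(z 3)^2+2*z 0*z 1*z 3) := by
    apply Real.sqrt_pos.mpr
    nlinarith [hp 1, hp 3, mul_pos (mul_pos (hp 0) (hp 1)) (hp 3)]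
  have hS : 0 < Real.sqrt ((z 2)^2+2*(z 0*z 4)*(z 2)+((z 0)^2+(z 4)^2-1)) := by
    apply Real.sqrt_pos.mpr
    nlinarith [hp 2, hp 4, mul_pos (mul_pos (hp 0) (hp 4)) (hp 2)]
  refine ⟨((z 0)^2 - 1) / (Real.sqrt ((z 1)^2+(z 3)^2+2*z 0*z 1*z 3)
      * Real.sqrt ((z 2)^2+2*(z 0*z 4)*(z 2)+((z 0)^2+(z 4)^2-1))^3),
    div_pos (by nlinarith) (mul_pos hK (pow_pos hS 3)), ?_⟩
  rw [div_mul_eq_mul_div]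
  unfold partialPhi
  rw [(hasD2 z hp h1).deriv]
  congr 1
  ring

lemma hC3 (z : Fin 6 → ℝ) (hp : ∀ j, 0 < z j) (h1 : 1 < z 0) :
    ∃ C, 0 < C ∧ partialPhi 3 z
      = C * (z 1*z 3*z 4 + z 3*z 5 + z 0*z 1*z 5 - (z 1)^2*z 2) := by
  have hK : 0 < Real.sqrt ((z 0)^2+(z 2)^2+(z 4)^2+2*z 0*z 2*z 4-1) :=
    Real.sqrt_pos.mpr (hA2pos z hp h1)
  have hS : 0 < Real.sqrt ((z 3)^2+2*(z 0*z 1)*(z 3)+(z 1)^2) := by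
    apply Real.sqrt_pos.mpr
    nlinarith [hp 1, hp 3, mul_pos (mul_pos (hp 0) (hp 1)) (hp 3)]
  refine ⟨((z 0)^2 - 1) / (Real.sqrt ((z 0)^2+(z 2)^2+(z 4)^2+2*z 0*z 2*z 4-1)
      * Real.sqrt ((z 3)^2+2*(z 0*z 1)*(z 3)+(z 1)^2)^3),
    div_pos (by nlinarith) (mul_pos hK (pow_pos hS 3)), ?_⟩
  rw [div_mul_eq_mul_div]
  unfold partialPhi
  rw [(hasD3 z hp h1).deriv]
  congr 1
  ring

lemma hC4 (z : Fin 6 → ℝ) (hp : ∀ j, 0 < z j) (h1 : 1 < z 0) :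
    ∃ C, 0 < C ∧ partialPhi 4 z
      = C * (z 1 + z 0*z 3 + z 2*z 3*z 4 + z 4*z 5 + z 0*z 2*z 5 - z 1*(z 2)^2) := by
  have hK : 0 < Real.sqrt ((z 1)^2+(z 3)^2+2*z 0*z 1*z 3) := by
    apply Real.sqrt_pos.mpr
    nlinarith [hp 1, hp 3, mul_pos (mul_pos (hp 0) (hp 1)) (hp 3)]
  have hS : 0 < Real.sqrt ((z 4)^2+2*(z 0*z 2)*(z 4)+((z 0)^2+(z 2)^2-1)) := by
    apply Real.sqrt_pos.mpr
    nlinarith [hp 2, hp 4, mul_pos (mul_pos (hp 0) (hp 2)) (hp 4)]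
  refine ⟨((z 0)^2 - 1) / (Real.sqrt ((z 1)^2+(z 3)^2+2*z 0*z 1*z 3)
      * Real.sqrt ((z 4)^2+2*(z 0*z 2)*(z 4)+((z 0)^2+(z 2)^2-1))^3),
    div_pos (by nlinarith) (mul_pos hK (pow_pos hS 3)), ?_⟩
  rw [div_mul_eq_mul_div]
  unfold partialPhi
  rw [(hasD4 z hp h1).deriv]
  congr 1
  ring

/-! ### The increment identities for the sign polynomials -/

lemma hinc1 (z : Fin 6 → ℝ) (hp : ∀ j, 0 < z j) (t s : ℝ)
    (hti : 0 < z 1 + t) (hsi : 0 < z 2 + s) :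
    ∃ α β : ℝ, 0 ≤ α ∧ 0 ≤ β ∧
      (fun w : Fin 6 → ℝ => w 1*w 2*w 3 + w 1*w 5 + w 0*w 3*w 5 - (w 3)^2*w 4)
          (z + t • unitVec 1 + s • unitVec 2)
        = (fun w : Fin 6 → ℝ => w 1*w 2*w 3 + w 1*w 5 + w 0*w 3*w 5 - (w 3)^2*w 4) z
          + t * α + s * β := by
  refine ⟨(z 2 + s)*z 3 + z 5, z 1 * z 3,
    by nlinarith [hp 3, hp 5], by nlinarith [hp 1, hp 3], ?_⟩
  simp only [shift_apply, Fin.isValue, Fin.reduceEq, reduceIte, if_true]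
  ring

lemma hinc2 (z : Fin 6 → ℝ) (hp : ∀ j, 0 < z j) (t s : ℝ)
    (hti : 0 < z 2 + t) (hsi : 0 < z 1 + s) :
    ∃ α β : ℝ, 0 ≤ α ∧ 0 ≤ β ∧
      (fun w : Fin 6 → ℝ => w 3 + w 0*w 1 + w 1*w 2*w 4 + w 2*w 5 + w 0*w 4*w 5 - w 3*(w 4)^2)
          (z + t • unitVec 2 + s • unitVec 1)
        = (fun w : Fin 6 → ℝ => w 3 + w 0*w 1 + w 1*w 2*w 4 + w 2*w 5 + w 0*w 4*w 5 - w 3*(w 4)^2) z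
          + t * α + s * β := by
  refine ⟨(z 1 + s)*z 4 + z 5, z 0 + z 2*z 4,
    by nlinarith [hp 4, hp 5], by nlinarith [hp 0, hp 2, hp 4, mul_pos (hp 2) (hp 4)], ?_⟩
  simp only [shift_apply, Fin.isValue, Fin.reduceEq, reduceIte, if_true]
  ring

lemma hinc3 (z : Fin 6 → ℝ) (hp : ∀ j, 0 < z j) (t s : ℝ)
    (hti : 0 < z 3 + t) (hsi : 0 < z 4 + s) :
    ∃ α β : ℝ, 0 ≤ α ∧ 0 ≤ β ∧
      (fun w : Fin 6 → ℝ => w 1*w 3*w 4 + w 3*w 5 + w 0*w 1*w 5 - (w 1)^2*w 2)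
          (z + t • unitVec 3 + s • unitVec 4)
        = (fun w : Fin 6 → ℝ => w 1*w 3*w 4 + w 3*w 5 + w 0*w 1*w 5 - (w 1)^2*w 2) z
          + t * α + s * β := by
  refine ⟨z 1*(z 4 + s) + z 5, z 1 * z 3,
    by nlinarith [hp 1, hp 5], by nlinarith [hp 1, hp 3], ?_⟩
  simp only [shift_apply, Fin.isValue, Fin.reduceEq, reduceIte, if_true]
  ring

lemma hinc4 (z : Fin 6 → ℝ) (hp : ∀ j, 0 < z j) (t s : ℝ)
    (hti : 0 < z 4 + t) (hsi : 0 < z 3 + s) :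
    ∃ α β : ℝ, 0 ≤ α ∧ 0 ≤ β ∧
      (fun w : Fin 6 → ℝ => w 1 + w 0*w 3 + w 2*w 3*w 4 + w 4*w 5 + w 0*w 2*w 5 - w 1*(w 2)^2)
          (z + t • unitVec 4 + s • unitVec 3)
        = (fun w : Fin 6 → ℝ => w 1 + w 0*w 3 + w 2*w 3*w 4 + w 4*w 5 + w 0*w 2*w 5 - w 1*(w 2)^2) z
          + t * α + s * β := by
  refine ⟨z 2*(z 3 + s) + z 5, z 0 + z 2*z 4,
    by nlinarith [hp 2, hp 5], by nlinarith [hp 0, hp 2, hp 4, mul_pos (hp 2) (hp 4)], ?_⟩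
  simp only [shift_apply, Fin.isValue, Fin.reduceEq, reduceIte, if_true]
  ring

/-! ### The abstract main argument -/

lemma main_case (i ih : Fin 6) (hi0 : i ≠ 0) (hih0 : ih ≠ 0) (hne : ih ≠ i)
    (H : (Fin 6 → ℝ) → ℝ)
    (hC : ∀ z : Fin 6 → ℝ, (∀ j, 0 < z j) → 1 < z 0 → ∃ C, 0 < C ∧ partialPhi i z = C * H z)
    (hdiff : ∀ z : Fin 6 → ℝ, (∀ j, 0 < z j) → 1 < z 0 →
      HasDerivAt (fun t => Phi (Function.update z i t)) (partialPhi i z) (z i))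
    (hinc : ∀ z : Fin 6 → ℝ, (∀ j, 0 < z j) → ∀ t s : ℝ, 0 < z i + t → 0 < z ih + s →
      ∃ α β : ℝ, 0 ≤ α ∧ 0 ≤ β ∧
        H (z + t • unitVec i + s • unitVec ih) = H z + t * α + s * β)
    (x : Fin 6 → ℝ) (hpos : ∀ j, 0 < x j) (hx1 : 1 < x 0) :
    (0 ≤ partialPhi i x →
      (∀ t s : ℝ, 0 ≤ t → 0 ≤ s →
        0 ≤ partialPhi i (x + t • unitVec i + s • unitVec ih)) ∧
      (∀ y : Fin 6 → ℝ, x i ≤ y i → (∀ j, j ≠ i → y j = x j) → Phi x ≤ Phi y)) ∧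
    (partialPhi i x ≤ 0 →
      (∀ t s : ℝ, t ≤ 0 → s ≤ 0 →
        (∀ j, 0 < (x + t • unitVec i + s • unitVec ih) j) →
        partialPhi i (x + t • unitVec i + s • unitVec ih) ≤ 0) ∧
      (∀ y : Fin 6 → ℝ, (∀ j, 0 < y j) → y i ≤ x i → (∀ j, j ≠ i → y j = x j) →
        Phi x ≤ Phi y)) := by
  obtain ⟨C, hCpos, hCx⟩ := hC x hpos hx1
  have hzpos : ∀ t s : ℝ, 0 ≤ t → 0 ≤ s → ∀ j, 0 < (x + t • unitVec i + s • unitVec ih) j := by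
    intro t s ht hs j
    rw [shift_apply]
    have := hpos j
    split_ifs <;> nlinarith
  have hz0 : ∀ t s : ℝ, (x + t • unitVec i + s • unitVec ih) 0 = x 0 := by
    intro t s
    rw [shift_apply, if_neg (fun h => hi0 h.symm), if_neg (fun h => hih0 h.symm)]
    ring
  have hzi : ∀ t s : ℝ, (x + t • unitVec i + s • unitVec ih) i = x i + t := by
    intro t s
    rw [shift_apply, if_pos rfl, if_neg (fun h => hne h.symm)]
    ring
  have hzih : ∀ t s : ℝ, (x + t • unitVec i + s • unitVec ih) ih = x ih + s := by
    intro t s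
    rw [shift_apply, if_pos rfl, if_neg hne]
    ring
  have hupos : ∀ t : ℝ, 0 < t → ∀ j, 0 < Function.update x i t j := by
    intro t ht j
    rw [Function.update_apply]
    split_ifs
    · exact ht
    · exact hpos j
  have hu0 : ∀ t : ℝ, Function.update x i t 0 = x 0 :=
    fun t => Function.update_of_ne (fun h => hi0 h.symm) _ _
  have hderiv : ∀ t : ℝ, 0 < t →
      HasDerivAt (fun u => Phi (Function.update x i u)) (partialPhi i (Function.update x i t)) t := by
    intro t ht
    have h := hdiff (Function.update x i t) (hupos t ht) (by rw [hu0]; exact hx1)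
    simpa [Function.update_idem, Function.update_self] using h
  have hHup : ∀ t : ℝ, x i ≤ t → 0 ≤ H x → 0 ≤ H (Function.update x i t) := by
    intro t ht hHx
    obtain ⟨α, β, hα, hβ, heq⟩ := hinc x hpos (t - x i) 0
      (by have := hpos i; linarith) (by simpa using hpos ih)
    rw [update_as_shift x i ih t, heq]
    nlinarith
  have hHdown : ∀ t : ℝ, 0 < t → t ≤ x i → H x ≤ 0 → H (Function.update x i t) ≤ 0 := by
    intro t ht hti hHx
    obtain ⟨α, β, hα, hβ, heq⟩ := hinc x hpos (t - x i) 0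
      (by linarith) (by simpa using hpos ih)
    rw [update_as_shift x i ih t, heq]
    nlinarith
  constructor
  · intro hd0
    have hHx : 0 ≤ H x := nonneg_of_mul_nonneg_right (hCx ▸ hd0) hCpos
    constructor
    · intro t s ht hs
      obtain ⟨α, β, hα, hβ, heq⟩ := hinc x hpos t s
        (by have := hpos i; linarith) (by have := hpos ih; linarith)
      obtain ⟨C', hC'pos, hC'⟩ := hC _ (hzpos t s ht hs) (by rw [hz0]; exact hx1)
      rw [hC', heq]
      have : 0 ≤ H x + t * α + s * β := by nlinarith
      positivity
    · intro y hyi hyj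
      have hyeq : y = Function.update x i (y i) := by
        funext j
        rw [Function.update_apply]
        split_ifs with h
        · rw [h]
        · exact hyj j h
      have hmono : MonotoneOn (fun u => Phi (Function.update x i u)) (Set.Icc (x i) (y i)) := by
        apply monotoneOn_of_deriv_nonneg (convex_Icc _ _)
        · intro t htm
          have ht : 0 < t := lt_of_lt_of_le (hpos i) htm.1
          exact ((hderiv t ht).continuousAt).continuousWithinAt
        · intro t htm
          rw [interior_Icc] at htm
          have ht : 0 < t := lt_of_lt_of_le (hpos i) htm.1.le
          exact ((hderiv t ht).differentiableAt).differentiableWithinAt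
        · intro t htm
          rw [interior_Icc] at htm
          have ht : 0 < t := lt_of_lt_of_le (hpos i) htm.1.le
          rw [(hderiv t ht).deriv]
          obtain ⟨C', hC'pos, hC'⟩ := hC (Function.update x i t) (hupos t ht)
            (by rw [hu0]; exact hx1)
          rw [hC']
          have := hHup t htm.1.le hHx
          positivity
      calc Phi x = Phi (Function.update x i (x i)) := by rw [Function.update_eq_self]
        _ ≤ Phi (Function.update x i (y i)) :=
            hmono ⟨le_rfl, hyi⟩ ⟨hyi, le_rfl⟩ hyi
        _ = Phi y := by rw [← hyeq]
  · intro hd0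
    have hHx : H x ≤ 0 := nonpos_of_mul_nonpos_right (hCx ▸ hd0) hCpos
    constructor
    · intro t s ht hs hzp
      have hti : 0 < x i + t := by have := hzp i; rwa [hzi] at this
      have hsi : 0 < x ih + s := by have := hzp ih; rwa [hzih] at this
      obtain ⟨α, β, hα, hβ, heq⟩ := hinc x hpos t s hti hsi
      obtain ⟨C', hC'pos, hC'⟩ := hC _ hzp (by rw [hz0]; exact hx1)
      rw [hC', heq]
      have h1 : H x + t * α + s * β ≤ 0 := by nlinarith
      exact mul_nonpos_of_nonneg_of_nonpos hC'pos.le h1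
    · intro y hypos hyi hyj
      have hyeq : y = Function.update x i (y i) := by
        funext j
        rw [Function.update_apply]
        split_ifs with h
        · rw [h]
        · exact hyj j h
      have hanti : AntitoneOn (fun u => Phi (Function.update x i u)) (Set.Icc (y i) (x i)) := by
        apply antitoneOn_of_deriv_nonpos (convex_Icc _ _)
        · intro t htm
          have ht : 0 < t := lt_of_lt_of_le (hypos i) htm.1
          exact ((hderiv t ht).continuousAt).continuousWithinAt
        · intro t htm
          rw [interior_Icc] at htm
          have ht : 0 < t := lt_of_lt_of_le (hypos i) htm.1.le
          exact ((hderiv t ht).differentiableAt).differentiableWithinAt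
        · intro t htm
          rw [interior_Icc] at htm
          have ht : 0 < t := lt_of_lt_of_le (hypos i) htm.1.le
          rw [(hderiv t ht).deriv]
          obtain ⟨C', hC'pos, hC'⟩ := hC (Function.update x i t) (hupos t ht)
            (by rw [hu0]; exact hx1)
          rw [hC']
          exact mul_nonpos_of_nonneg_of_nonpos hC'pos.le
            (hHdown t ht htm.2.le hHx)
      calc Phi x = Phi (Function.update x i (x i)) := by rw [Function.update_eq_self]
        _ ≤ Phi (Function.update x i (y i)) :=
            hanti ⟨le_rfl, hyi⟩ ⟨hyi, le_rfl⟩ hyi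
        _ = Phi y := by rw [← hyeq]

/-- sign persistence of the partial derivatives ∂φ/∂x_i
(i ∈ {x2,x3,x4,x5}, i.e. coordinates 1,2,3,4) under increasing (resp. decreasing)
the coordinates i and î, and the resulting monotonicity of φ.
Here `i`, `ih` range over the pairs (x2,x3), (x3,x2), (x4,x5), (x5,x4). -/
theorem stmt_10 (x : Fin 6 → ℝ) (hpos : ∀ j, 0 < x j) (hx1 : 1 < x 0)
    (i ih : Fin 6)
    (hpair : (i = 1 ∧ ih = 2) ∨ (i = 2 ∧ ih = 1) ∨ (i = 3 ∧ ih = 4) ∨ (i = 4 ∧ ih = 3)) :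
    (0 ≤ partialPhi i x →
      (∀ t s : ℝ, 0 ≤ t → 0 ≤ s →
        0 ≤ partialPhi i (x + t • unitVec i + s • unitVec ih)) ∧
      (∀ y : Fin 6 → ℝ, x i ≤ y i → (∀ j, j ≠ i → y j = x j) → Phi x ≤ Phi y)) ∧
    (partialPhi i x ≤ 0 →
      (∀ t s : ℝ, t ≤ 0 → s ≤ 0 →
        (∀ j, 0 < (x + t • unitVec i + s • unitVec ih) j) →
        partialPhi i (x + t • unitVec i + s • unitVec ih) ≤ 0) ∧
      (∀ y : Fin 6 → ℝ, (∀ j, 0 < y j) → y i ≤ x i → (∀ j, j ≠ i → y j = x j) →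
        Phi x ≤ Phi y)) := by
  rcases hpair with ⟨hi, hih⟩ | ⟨hi, hih⟩ | ⟨hi, hih⟩ | ⟨hi, hih⟩ <;> subst hi <;> subst hih
  · exact main_case 1 2 (by decide) (by decide) (by decide)
      (fun w => w 1*w 2*w 3 + w 1*w 5 + w 0*w 3*w 5 - (w 3)^2*w 4)
      hC1
      (fun z hp h1 => by unfold partialPhi; exact (hasD1 z hp h1).differentiableAt.hasDerivAt)
      hinc1 x hpos hx1
  · exact main_case 2 1 (by decide) (by decide) (by decide)
      (fun w => w 3 + w 0*w 1 + w 1*w 2*w 4 + w 2*w 5 + w 0*w 4*w 5 - w 3*(w 4)^2)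
      hC2
      (fun z hp h1 => by unfold partialPhi; exact (hasD2 z hp h1).differentiableAt.hasDerivAt)
      hinc2 x hpos hx1
  · exact main_case 3 4 (by decide) (by decide) (by decide)
      (fun w => w 1*w 3*w 4 + w 3*w 5 + w 0*w 1*w 5 - (w 1)^2*w 2)
      hC3
      (fun z hp h1 => by unfold partialPhi; exact (hasD3 z hp h1).differentiableAt.hasDerivAt)
      hinc3 x hpos hx1
  · exact main_case 4 3 (by decide) (by decide) (by decide)
      (fun w => w 1 + w 0*w 3 + w 2*w 3*w 4 + w 4*w 5 + w 0*w 2*w 5 - w 1*(w 2)^2)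
      hC4
      (fun z hp h1 => by unfold partialPhi; exact (hasD4 z hp h1).differentiableAt.hasDerivAt)
      hinc4 x hpos hx1
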